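/- Converse bound of entanglement cost in exact state merging via majorization (Corollary 3.1 of the paper). Let D, d_A, d_B, K, L be positive integers and let |ψ⟩ ∈ ℂ^D⊗ℂ^{d_A}⊗ℂ^{d_B} be a unit vector whose reduced density matrix on the first factor satisfies ψ^R = 1_D/D. Let λ_0^B denote the largest eigenvalue of ψ^B, the reduced density matrix on the third factor, and let ψ^{AB} denote the reduced density matrix on the last two factors. If the Hermitian operator (1_K/K) ⊗ ψ^B is majorized by the Hermitian operator (1_L/L) ⊗ ψ^{AB}, then K/L ≥ λ_0^B · D, i.e., log₂ K − log₂ L ≥ log₂( λ_0^B D ). Moreover, in the non-catalytic case L = 1: if (1_K/K) ⊗ ψ^B is majorized by ψ^{AB}, then K ≥ ⌈ λ_0^B D ⌉, i.e., log₂ K ≥ log₂ ⌈ λ_0^B D ⌉, where ⌈·⌉ is the ceiling function. -/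

import Mathlib

open Matrix Kronecker

noncomputable section

/-- The sum of the `k` largest entries of a finite family of reals, padded with zeros:
the maximum of `∑_{i∈s} lam i` over subsets `s` with at most `k` elements. -/
def topSum {n : Type*} [Fintype n] [DecidableEq n] (lam : n → ℝ) (k : ℕ) : ℝ :=
  Finset.sup' (Finset.univ.powerset.filter fun s => s.card ≤ k)
    ⟨∅, by simp⟩ fun s => ∑ i ∈ s, lam i

/-- `A` is majorized by `B` (Hermitian matrices, possibly of different sizes, eigenvalue
lists padded with zeros): every partial sum of the decreasingly ordered eigenvalues of `A`
is at most the corresponding one of `B`, with equal total sums. -/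
def MajorizedBy {m n : Type*} [Fintype m] [DecidableEq m] [Fintype n] [DecidableEq n]
    (A : Matrix m m ℂ) (B : Matrix n n ℂ) : Prop :=
  ∃ (hA : A.IsHermitian) (hB : B.IsHermitian),
    (∀ k, topSum hA.eigenvalues k ≤ topSum hB.eigenvalues k) ∧
    (∑ i, hA.eigenvalues i = ∑ j, hB.eigenvalues j)

/-- The reduced density matrix of a tripartite pure state on the last two factors. -/
def redAB {d1 d2 d3 : ℕ} (v : Fin d1 × Fin d2 × Fin d3 → ℂ) :
    Matrix (Fin d2 × Fin d3) (Fin d2 × Fin d3) ℂ :=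
  Matrix.of fun x y => ∑ r, v (r, x.1, x.2) * star (v (r, y.1, y.2))

/-- The reduced density matrix of a tripartite pure state on the last factor. -/
def redB {d1 d2 d3 : ℕ} (v : Fin d1 × Fin d2 × Fin d3 → ℂ) :
    Matrix (Fin d3) (Fin d3) ℂ :=
  Matrix.of fun b b' => ∑ r, ∑ a, v (r, a, b) * star (v (r, a, b'))

section helpers

variable {n : Type*} [Fintype n] [DecidableEq n]

/-- Any real eigenvalue (with eigenvector) of a Hermitian matrix appears among
`hA.eigenvalues`. -/
lemma mem_eigenvalues_of_eigen {A : Matrix n n ℂ} (hA : A.IsHermitian) {x : ℝ} {w : n → ℂ}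
    (hw : w ≠ 0) (h : A *ᵥ w = (x : ℂ) • w) : ∃ i, hA.eigenvalues i = x := by
  have hx : x ∈ spectrum ℝ A := by
    rw [← spectrum.algebraMap_mem_iff ℂ, spectrum.mem_iff]
    intro hu
    rw [show (algebraMap ℝ ℂ) x = (x : ℂ) from rfl, Matrix.isUnit_iff_isUnit_det] at hu
    have hdet : ((algebraMap ℂ (Matrix n n ℂ)) x - A).det = 0 := by
      refine Matrix.exists_mulVec_eq_zero_iff.mp ⟨w, hw, ?_⟩
      rw [Matrix.sub_mulVec, h, Algebra.algebraMap_eq_smul_one, Matrix.smul_mulVec,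
        Matrix.one_mulVec, sub_self]
    rw [hdet] at hu
    exact not_isUnit_zero hu
  rw [hA.spectrum_real_eq_range_eigenvalues] at hx
  obtain ⟨i, hi⟩ := hx
  exact ⟨i, hi⟩

/-- Each `hA.eigenvalues i` has an eigenvector. -/
lemma exists_eigvec {A : Matrix n n ℂ} (hA : A.IsHermitian) (i : n) :
    ∃ w : n → ℂ, w ≠ 0 ∧ A *ᵥ w = ((hA.eigenvalues i : ℝ) : ℂ) • w := by
  refine ⟨⇑(hA.eigenvectorBasis i), ?_, ?_⟩
  · intro h
    exact hA.eigenvectorBasis.orthonormal.ne_zero i (by ext j; exact congrFun h j)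
  · rw [hA.mulVec_eigenvectorBasis i]
    ext j
    simp [Complex.real_smul]

lemma sum_eigenvalues_eq_trace' {A : Matrix n n ℂ} (hA : A.IsHermitian) :
    (∑ i, (hA.eigenvalues i : ℂ)) = A.trace := by
  exact hA.trace_eq_sum_eigenvalues.symm

lemma le_topSum_one {lam : n → ℝ} {x : ℝ} (h : ∃ i, lam i = x) : x ≤ topSum lam 1 := by
  obtain ⟨i, hi⟩ := h
  have hmem : ({i} : Finset n) ∈ Finset.univ.powerset.filter fun s => s.card ≤ 1 := by
    simp
  calc x = ∑ j ∈ ({i} : Finset n), lam j := by simp [hi]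
    _ ≤ _ := Finset.le_sup' (fun s => ∑ j ∈ s, lam j) hmem

lemma topSum_one_le {lam : n → ℝ} {c : ℝ} (hc : 0 ≤ c) (h : ∀ i, lam i ≤ c) :
    topSum lam 1 ≤ c := by
  apply Finset.sup'_le
  intro s hs
  simp only [Finset.mem_filter] at hs
  rcases s.eq_empty_or_nonempty with rfl | hne
  · simpa using hc
  · obtain ⟨i, rfl⟩ := Finset.card_eq_one.mp (le_antisymm hs.2 hne.card_pos)
    simpa using h i

/-- slice an eigenvector of `1 ⊗ₖ C`. -/
lemma kron_slice {m : Type*} [Fintype m] [DecidableEq m] {L : ℕ}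
    {C : Matrix m m ℂ} {w : Fin L × m → ℂ} (hw : w ≠ 0) {μ : ℂ}
    (h : ((1 : Matrix (Fin L) (Fin L) ℂ) ⊗ₖ C) *ᵥ w = μ • w) :
    ∃ u : m → ℂ, u ≠ 0 ∧ C *ᵥ u = μ • u := by
  have hne : ∃ p : Fin L × m, w p ≠ 0 := by
    by_contra hc
    push_neg at hc
    exact hw (funext hc)
  obtain ⟨⟨l, y0⟩, hp⟩ := hne
  refine ⟨fun y => w (l, y), fun hz => hp (congrFun hz y0), ?_⟩
  ext y
  have := congrFun h (l, y)
  simp only [Matrix.mulVec, dotProduct, Pi.smul_apply, smul_eq_mul] at this ⊢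
  rw [← this]
  rw [Fintype.sum_prod_type]
  simp [Matrix.kroneckerMap_apply, Matrix.one_apply, ite_mul, Finset.sum_ite_eq' (Finset.univ) l]

/-- Embed an eigenvector of `C` into one of `K⁻¹ • (1 ⊗ₖ C)`. -/
lemma kron_embed {m : Type*} [Fintype m] [DecidableEq m] {K : ℕ} (hK : 0 < K)
    {C : Matrix m m ℂ} {v : m → ℂ} (hv : v ≠ 0) {μ : ℂ}
    (h : C *ᵥ v = μ • v) :
    ∃ w : Fin K × m → ℂ, w ≠ 0 ∧
      (((K : ℂ))⁻¹ • ((1 : Matrix (Fin K) (Fin K) ℂ) ⊗ₖ C)) *ᵥ w = ((K : ℂ)⁻¹ * μ) • w := by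
  set i0 : Fin K := ⟨0, hK⟩
  refine ⟨fun p => if p.1 = i0 then v p.2 else 0, ?_, ?_⟩
  · intro hw
    apply hv
    ext y
    have := congrFun hw (i0, y)
    simpa using this
  · ext ⟨k, y⟩
    simp only [Matrix.smul_mulVec, Pi.smul_apply, smul_eq_mul]
    rw [mul_assoc]
    congr 1
    have hsl : ((1 : Matrix (Fin K) (Fin K) ℂ) ⊗ₖ C) *ᵥ (fun p => if p.1 = i0 then v p.2 else 0) =
        fun p : Fin K × m => if p.1 = i0 then (C *ᵥ v) p.2 else 0 := by
      ext ⟨k', y'⟩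
      simp only [Matrix.mulVec, dotProduct]
      rw [Fintype.sum_prod_type]
      simp [Matrix.kroneckerMap_apply, Matrix.one_apply, ite_mul, mul_ite,
        Finset.sum_ite_eq' (Finset.univ) k', Matrix.mulVec, dotProduct]
    rw [hsl]
    simp only [h, Pi.smul_apply, smul_eq_mul]
    split <;> simp

end helpers

section red

variable {D dA dB : ℕ} (ψ : Fin D × Fin dA × Fin dB → ℂ)

lemma redAB_eq_mul :
    redAB ψ = (Matrix.of fun (x : Fin dA × Fin dB) (r : Fin D) => ψ (r, x.1, x.2)) *
      (Matrix.of fun (x : Fin dA × Fin dB) (r : Fin D) => ψ (r, x.1, x.2))ᴴ := by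
  ext x y
  simp [redAB, Matrix.mul_apply, Matrix.conjTranspose_apply]

lemma eig_redAB_le (hD : 0 < D)
    (hR : (Matrix.of fun r r' : Fin D => ∑ a, ∑ b, ψ (r, a, b) * star (ψ (r', a, b)))
        = ((D : ℂ))⁻¹ • 1)
    {x : ℝ} {u : Fin dA × Fin dB → ℂ} (hu : u ≠ 0)
    (h : redAB ψ *ᵥ u = (x : ℂ) • u) : x ≤ (D : ℝ)⁻¹ := by
  set M : Matrix (Fin dA × Fin dB) (Fin D) ℂ :=
    Matrix.of fun (x : Fin dA × Fin dB) (r : Fin D) => ψ (r, x.1, x.2) with hM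
  have hMM : Mᴴ * M = ((D : ℂ))⁻¹ • 1 := by
    ext r r'
    have := congrFun (congrFun hR r) r'
    simp only [Matrix.of_apply] at this
    simp only [Matrix.mul_apply, Matrix.conjTranspose_apply, hM, Matrix.of_apply]
    calc ∑ p : Fin dA × Fin dB, star (ψ (r, p.1, p.2)) * ψ (r', p.1, p.2)
        = star (∑ a, ∑ b, ψ (r, a, b) * star (ψ (r', a, b))) := by
          rw [Fintype.sum_prod_type, star_sum]
          refine Finset.sum_congr rfl fun a _ => ?_
          rw [star_sum]
          exact Finset.sum_congr rfl fun b _ => by simp [star_mul', star_star]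
      _ = star ((((D : ℂ))⁻¹ • (1 : Matrix (Fin D) (Fin D) ℂ)) r r') := by rw [this]
      _ = (((D : ℂ))⁻¹ • (1 : Matrix (Fin D) (Fin D) ℂ)) r r' := by
          simp [Matrix.one_apply]
          split <;> simp
  by_cases hz : Mᴴ *ᵥ u = 0
  · have h0 : (x : ℂ) • u = 0 := by
      rw [← h, redAB_eq_mul, ← Matrix.mulVec_mulVec, hz, Matrix.mulVec_zero]
    have : (x : ℂ) = 0 := by
      rcases smul_eq_zero.mp h0 with hx | hx
      · exact hx
      · exact absurd hx hu
    have : x = 0 := by exact_mod_cast this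
    rw [this]
    positivity
  · have key : (Mᴴ * M) *ᵥ (Mᴴ *ᵥ u) = (x : ℂ) • (Mᴴ *ᵥ u) := by
      rw [← Matrix.mulVec_mulVec]
      rw [show M *ᵥ (Mᴴ *ᵥ u) = (x:ℂ) • u by
        rw [Matrix.mulVec_mulVec, ← redAB_eq_mul, h]]
      rw [Matrix.mulVec_smul]
    rw [hMM, Matrix.smul_mulVec, Matrix.one_mulVec] at key
    have hx : ((D : ℂ))⁻¹ = (x : ℂ) := by
      by_contra hne
      exact hz (by
        have := sub_eq_zero.mpr key
        rw [← sub_smul] at this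
        rcases smul_eq_zero.mp this with h1 | h1
        · exact absurd (sub_eq_zero.mp h1) hne
        · exact h1)
    have : ((D:ℝ))⁻¹ = x := by
      refine Complex.ofReal_injective ?_
      push_cast
      exact hx
    exact this.ge

lemma redB_isHermitian : (redB ψ).IsHermitian := by
  ext b b'
  simp only [Matrix.conjTranspose_apply, redB, Matrix.of_apply, star_sum]
  exact Finset.sum_congr rfl fun r _ => Finset.sum_congr rfl fun a _ => by
    simp [star_mul', star_star, mul_comm]

lemma trace_redB (hnorm : ∑ x, Complex.normSq (ψ x) = 1) : (redB ψ).trace = 1 := by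
  have h1 : (redB ψ).trace = ∑ b, ∑ r, ∑ a, ((Complex.normSq (ψ (r, a, b)) : ℝ) : ℂ) := by
    simp only [Matrix.trace, Matrix.diag, redB, Matrix.of_apply]
    refine Finset.sum_congr rfl fun b _ => Finset.sum_congr rfl fun r _ =>
      Finset.sum_congr rfl fun a _ => ?_
    rw [← Complex.mul_conj]
    rfl
  rw [h1]
  have h2 : ∑ b, ∑ r, ∑ a, ((Complex.normSq (ψ (r, a, b)) : ℝ) : ℂ)
      = ((∑ x, Complex.normSq (ψ x) : ℝ) : ℂ) := by
    push_cast
    rw [Fintype.sum_prod_type]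
    rw [Finset.sum_comm]
    refine Finset.sum_congr rfl fun r _ => ?_
    rw [Fintype.sum_prod_type, Finset.sum_comm]
  rw [h2, hnorm]
  norm_num

end red

/-- **Converse bound of entanglement cost in exact state merging via majorization**
(Corollary 3.1).  For a tripartite pure state `ψ` with `ψ^R = 1/D`:
if `(1_K/K) ⊗ ψ^B ≺ (1_L/L) ⊗ ψ^{AB}` then `K/L ≥ λ₀^B·D`
(equivalently `log₂K − log₂L ≥ log₂(λ₀^B D)`); and in the non-catalytic case,
if `(1_K/K) ⊗ ψ^B ≺ ψ^{AB}` then `K ≥ ⌈λ₀^B D⌉`. -/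
theorem exact_merging_majorization_converse
    (D dA dB K L : ℕ) (hD : 0 < D) (hK : 0 < K) (hL : 0 < L)
    (ψ : Fin D × Fin dA × Fin dB → ℂ)
    (hnorm : ∑ x, Complex.normSq (ψ x) = 1)
    (hR : (Matrix.of fun r r' : Fin D => ∑ a, ∑ b, ψ (r, a, b) * star (ψ (r', a, b)))
        = ((D : ℂ))⁻¹ • 1)
    (lam0 : ℝ)
    (hlam : IsGreatest {x : ℝ | ∃ v : Fin dB → ℂ, v ≠ 0 ∧
        (redB ψ).mulVec v = (x : ℂ) • v} lam0) :
    (MajorizedBy (((K : ℂ))⁻¹ • ((1 : Matrix (Fin K) (Fin K) ℂ) ⊗ₖ redB ψ))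
        (((L : ℂ))⁻¹ • ((1 : Matrix (Fin L) (Fin L) ℂ) ⊗ₖ redAB ψ)) →
      lam0 * D ≤ (K : ℝ) / (L : ℝ) ∧
      Real.logb 2 (lam0 * D) ≤ Real.logb 2 K - Real.logb 2 L) ∧
    (MajorizedBy (((K : ℂ))⁻¹ • ((1 : Matrix (Fin K) (Fin K) ℂ) ⊗ₖ redB ψ))
        (redAB ψ) →
      Nat.ceil (lam0 * D) ≤ K ∧
      Real.logb 2 (Nat.ceil (lam0 * D) : ℝ) ≤ Real.logb 2 K) := by
  have hDR : (0:ℝ) < D := by exact_mod_cast hD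
  have hKR : (0:ℝ) < K := by exact_mod_cast hK
  have hLR : (0:ℝ) < L := by exact_mod_cast hL
  -- lam0 > 0
  have hHer := redB_isHermitian ψ
  have hsum1 : ∑ i, hHer.eigenvalues i = 1 := by
    have := sum_eigenvalues_eq_trace' hHer
    rw [trace_redB ψ hnorm] at this
    exact_mod_cast this
  have hub : ∀ i, hHer.eigenvalues i ≤ lam0 := fun i => by
    obtain ⟨w, hw, he⟩ := exists_eigvec hHer i
    exact hlam.2 ⟨w, hw, he⟩
  have hlam0_pos : 0 < lam0 := by
    by_contra hc
    push_neg at hc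
    have h1 : (1:ℝ) ≤ (dB : ℝ) * lam0 := by
      calc (1:ℝ) = ∑ i, hHer.eigenvalues i := hsum1.symm
        _ ≤ ∑ _i : Fin dB, lam0 := Finset.sum_le_sum fun i _ => hub i
        _ = (dB : ℝ) * lam0 := by simp [mul_comm]
    have h2 : (dB : ℝ) * lam0 ≤ 0 :=
      mul_nonpos_of_nonneg_of_nonpos (Nat.cast_nonneg dB) hc
    linarith
  -- eigenvector of the left-hand matrix
  obtain ⟨v, hv, hveq⟩ := hlam.1
  obtain ⟨w, hw, hweq⟩ := kron_embed hK hv hveq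
  have hweq' : (((K : ℂ))⁻¹ • ((1 : Matrix (Fin K) (Fin K) ℂ) ⊗ₖ redB ψ)) *ᵥ w
      = ((lam0 / K : ℝ) : ℂ) • w := by
    rw [hweq]
    congr 1
    push_cast
    ring
  constructor
  · rintro ⟨hA, hB, hineq, -⟩
    have h1 : lam0 / K ≤ topSum hA.eigenvalues 1 :=
      le_topSum_one (mem_eigenvalues_of_eigen hA hw hweq')
    have h2 : topSum hB.eigenvalues 1 ≤ ((L : ℝ) * D)⁻¹ := by
      refine topSum_one_le (by positivity) fun j => ?_
      obtain ⟨w2, hw2, he2⟩ := exists_eigvec hB j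
      set x := hB.eigenvalues j
      have he3 : ((1 : Matrix (Fin L) (Fin L) ℂ) ⊗ₖ redAB ψ) *ᵥ w2
          = (((L : ℝ) * x : ℝ) : ℂ) • w2 := by
        have hLne : ((L : ℂ)) ≠ 0 := by exact_mod_cast hLR.ne'
        have := congrArg (fun z => (L : ℂ) • z) he2
        simp only [Matrix.smul_mulVec] at this ⊢
        rw [smul_smul, smul_smul] at this
        rw [mul_inv_cancel₀ hLne, one_smul] at this
        rw [this]
        congr 1
        push_cast
        ring
      obtain ⟨u, hu, hue⟩ := kron_slice hw2 he3
      have hxle : (L : ℝ) * x ≤ (D : ℝ)⁻¹ := eig_redAB_le ψ hD hR hu hue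
      have hx2 : x ≤ (D:ℝ)⁻¹ / L := (le_div_iff₀' hLR).mpr hxle
      calc x ≤ (D:ℝ)⁻¹ / L := hx2
        _ = ((L : ℝ) * D)⁻¹ := by rw [mul_inv, div_eq_mul_inv, mul_comm]
    have hmain : lam0 / K ≤ ((L : ℝ) * D)⁻¹ := le_trans h1 (le_trans (hineq 1) h2)
    have hKL : lam0 * D ≤ (K : ℝ) / L := by
      rw [div_le_iff₀ hKR] at hmain
      have h3 : lam0 * (D * L) ≤ ((L:ℝ) * D)⁻¹ * K * (D * L) :=
        mul_le_mul_of_nonneg_right hmain (by positivity)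
      have h4 : ((L:ℝ) * D)⁻¹ * K * (D * L) = K := by
        field_simp
      rw [le_div_iff₀ hLR]
      calc lam0 * (D:ℝ) * L = lam0 * (D * L) := by ring
        _ ≤ _ := h3
        _ = K := h4
    refine ⟨hKL, ?_⟩
    have hlog := Real.logb_le_logb_of_le (b := 2) one_lt_two (by positivity) hKL
    rwa [Real.logb_div hKR.ne' hLR.ne'] at hlog
  · rintro ⟨hA, hB, hineq, -⟩
    have h1 : lam0 / K ≤ topSum hA.eigenvalues 1 :=
      le_topSum_one (mem_eigenvalues_of_eigen hA hw hweq')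
    have h2 : topSum hB.eigenvalues 1 ≤ (D : ℝ)⁻¹ := by
      refine topSum_one_le (by positivity) fun j => ?_
      obtain ⟨w2, hw2, he2⟩ := exists_eigvec hB j
      exact eig_redAB_le ψ hD hR hw2 he2
    have hmain : lam0 / K ≤ (D : ℝ)⁻¹ := le_trans h1 (le_trans (hineq 1) h2)
    have hKD : lam0 * D ≤ (K : ℝ) := by
      rw [div_le_iff₀ hKR] at hmain
      have h3 : lam0 * (D:ℝ) ≤ (D:ℝ)⁻¹ * K * D :=
        mul_le_mul_of_nonneg_right hmain (by positivity)
      have h4 : ((D:ℝ))⁻¹ * K * D = K := by field_simp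
      calc lam0 * (D:ℝ) ≤ _ := h3
        _ = K := h4
    have hceil : Nat.ceil (lam0 * D) ≤ K := Nat.ceil_le.mpr hKD
    refine ⟨hceil, ?_⟩
    have hpos : (0:ℝ) < (Nat.ceil (lam0 * D) : ℝ) := by
      have : 0 < Nat.ceil (lam0 * D) := Nat.ceil_pos.mpr (by positivity)
      exact_mod_cast this
    exact Real.logb_le_logb_of_le one_lt_two hpos (by exact_mod_cast hceil)

end
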